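/- arXiv:2310.16423 — 2 statements merged into one kernel-verified Lean document; each statement's English description precedes it below -/
import Mathlib

section
/- Let G be a finite group, H ≤ G, and ψ a PRIR of G with respect to H. Suppose the transversal {t_1,...,t_s} satisfies h(Σ_k t_k)h^{-1} = Σ_k t_k in the group algebra ℂ[G] for all h ∈ H, and that the restriction of ψ to H is multiplicity-free. Then Σ_{k=1}^{s} ψ(t_k) is block diagonal, equal to ⊕_{α} η_μ(α)·1_{d_α}, i.e. on each irreducible H-block labelled α it acts as a scalar η_μ(α) times the identity. -/
open Matrix

noncomputable section

/-- A matrix representation is irreducible iff it has no nontrivial invariant subspace. -/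
def MatIrred {G : Type*} [Group G] {ι : Type*} [Fintype ι] [DecidableEq ι]
    (ρ : G →* Matrix ι ι ℂ) : Prop :=
  ∀ W : Submodule ℂ (ι → ℂ), (∀ g : G, ∀ v ∈ W, (ρ g).mulVec v ∈ W) → W = ⊥ ∨ W = ⊤

/-- Inequivalence of two matrix representations: every intertwiner vanishes. -/
def MatInequiv {G : Type*} [Group G] {ι κ : Type*} [Fintype ι] [DecidableEq ι]
    [Fintype κ] [DecidableEq κ]
    (ρ : G →* Matrix ι ι ℂ) (π : G →* Matrix κ κ ℂ) : Prop :=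
  ∀ S : Matrix ι κ ℂ, (∀ g : G, ρ g * S = S * π g) → S = 0

section Helpers

lemma matrix_eq_zero_of_mulVec {ι : Type*} [Fintype ι] [DecidableEq ι]
    (M : Matrix ι ι ℂ) (h : ∀ v, M *ᵥ v = 0) : M = 0 := by
  ext i j
  have := congrFun (h (Pi.single j 1)) i
  simpa [Matrix.mulVec_single] using this

lemma schur_comm {G ι : Type*} [Group G] [Fintype ι] [DecidableEq ι]
    (ρ : G →* Matrix ι ι ℂ) (hirr : MatIrred ρ) (M : Matrix ι ι ℂ)
    (hM : ∀ g, ρ g * M = M * ρ g) : ∃ c : ℂ, M = c • 1 := by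
  rcases isEmpty_or_nonempty ι with hι | hι
  · exact ⟨0, Subsingleton.elim _ _⟩
  obtain ⟨c, hc⟩ := Module.End.exists_eigenvalue M.mulVecLin
  obtain ⟨v, hv⟩ := hc.exists_hasEigenvector
  refine ⟨c, ?_⟩
  set W : Submodule ℂ (ι → ℂ) := LinearMap.ker (M - c • 1).mulVecLin with hW
  have hinv : ∀ g : G, ∀ w ∈ W, (ρ g).mulVec w ∈ W := by
    intro g w hw
    simp only [hW, LinearMap.mem_ker, Matrix.mulVecLin_apply] at hw ⊢
    have hcomm : (M - c • 1) * ρ g = ρ g * (M - c • 1) := by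
      rw [Matrix.sub_mul, Matrix.mul_sub, hM g, Matrix.mul_smul, Matrix.smul_mul,
        Matrix.mul_one, Matrix.one_mul]
    rw [Matrix.mulVec_mulVec, hcomm, ← Matrix.mulVec_mulVec, hw, Matrix.mulVec_zero]
  have hne : W ≠ ⊥ := by
    intro hbot
    have hmem : v ∈ W := by
      simp only [hW, LinearMap.mem_ker, Matrix.mulVecLin_apply]
      have h1 : M *ᵥ v = c • v := hv.apply_eq_smul
      rw [Matrix.sub_mulVec, h1, Matrix.smul_mulVec, Matrix.one_mulVec, sub_self]
    rw [hbot] at hmem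
    exact hv.right (by simpa using hmem)
  rcases hirr W hinv with h | h
  · exact absurd h hne
  · have hz : ∀ w, (M - c • 1) *ᵥ w = 0 := by
      intro w
      have : w ∈ W := h ▸ Submodule.mem_top
      simpa only [hW, LinearMap.mem_ker, Matrix.mulVecLin_apply] using this
    exact sub_eq_zero.mp (matrix_eq_zero_of_mulVec _ hz)

variable {B : Type*} [Fintype B] [DecidableEq B] {dB : B → ℕ}

lemma blockDiagonal'_mul_apply (A : ∀ b, Matrix (Fin (dB b)) (Fin (dB b)) ℂ)
    (T : Matrix ((b : B) × Fin (dB b)) ((b : B) × Fin (dB b)) ℂ)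
    (b b' : B) (i : Fin (dB b)) (j : Fin (dB b')) :
    (blockDiagonal' A * T) ⟨b, i⟩ ⟨b', j⟩ = ∑ l, A b i l * T ⟨b, l⟩ ⟨b', j⟩ := by
  rw [Matrix.mul_apply, ← Finset.univ_sigma_univ, Finset.sum_sigma]
  rw [Finset.sum_eq_single b]
  · simp [Matrix.blockDiagonal'_apply_eq]
  · intro c _ hc
    simp [Matrix.blockDiagonal'_apply_ne _ _ _ hc.symm]
  · simp

lemma mul_blockDiagonal'_apply (A : ∀ b, Matrix (Fin (dB b)) (Fin (dB b)) ℂ)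
    (T : Matrix ((b : B) × Fin (dB b)) ((b : B) × Fin (dB b)) ℂ)
    (b b' : B) (i : Fin (dB b)) (j : Fin (dB b')) :
    (T * blockDiagonal' A) ⟨b, i⟩ ⟨b', j⟩ = ∑ l, T ⟨b, i⟩ ⟨b', l⟩ * A b' l j := by
  rw [Matrix.mul_apply, ← Finset.univ_sigma_univ, Finset.sum_sigma]
  rw [Finset.sum_eq_single b']
  · simp [Matrix.blockDiagonal'_apply_eq]
  · intro c _ hc
    simp [Matrix.blockDiagonal'_apply_ne _ _ _ hc]
  · simp

end Helpers

/-- let `ψ` be a PRIR of `G` w.r.t. `H ≤ G` (irreducible unitary, block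
diagonal on `H` with irreducible blocks `φ^α`), whose restriction to `H` is
multiplicity-free, and let `{t_k}` be a transversal whose formal sum `Σ_k t_k ∈ ℂ[G]`
is invariant under conjugation by `H`. Then `Σ_k ψ(t_k)` is block diagonal,
`⊕_α η_μ(α)·1_{d_α}`: on each irreducible `H`-block it is a scalar multiple of the
identity. -/
theorem transversal_sum_block_scalar {G : Type*} [Group G] [Fintype G]
    (H : Subgroup G) {s : ℕ} (t : Fin s → G)
    (htrans : ∀ g : G, ∃! k : Fin s, (t k)⁻¹ * g ∈ H)
    {B : Type*} [Fintype B] [DecidableEq B] (dB : B → ℕ)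
    (φ : ∀ b : B, H →* Matrix (Fin (dB b)) (Fin (dB b)) ℂ)
    (ψ : G →* Matrix ((b : B) × Fin (dB b)) ((b : B) × Fin (dB b)) ℂ)
    (hψu : ∀ g : G, (ψ g)ᴴ * ψ g = 1) (hψirr : MatIrred ψ)
    (hblock : ∀ h : H, ψ (h : G) = Matrix.blockDiagonal' (fun b => φ b h))
    (hφu : ∀ b (h : H), (φ b h)ᴴ * φ b h = 1)
    (hφirr : ∀ b, MatIrred (φ b))
    (hmf : ∀ b b' : B, b ≠ b' → MatInequiv (φ b) (φ b'))
    (hcomm : ∀ h : H,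
      MonoidAlgebra.of ℂ G (h : G) * (∑ k : Fin s, MonoidAlgebra.of ℂ G (t k)) *
          MonoidAlgebra.of ℂ G ((h : G)⁻¹)
        = ∑ k : Fin s, MonoidAlgebra.of ℂ G (t k)) :
    ∃ η : B → ℂ, ∑ k : Fin s, ψ (t k) =
      Matrix.blockDiagonal' (fun b => η b • (1 : Matrix (Fin (dB b)) (Fin (dB b)) ℂ)) := by
  set T := ∑ k : Fin s, ψ (t k) with hT
  have hTcomm : ∀ h : H, ψ (h : G) * T = T * ψ (h : G) := by
    intro h
    have Φeq := congrArg (MonoidAlgebra.lift ℂ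
      (Matrix ((b : B) × Fin (dB b)) ((b : B) × Fin (dB b)) ℂ) G ψ) (hcomm h)
    simp only [_root_.map_mul, map_sum, MonoidAlgebra.lift_of] at Φeq
    have h1 : ψ ((h : G)⁻¹) * ψ (h : G) = 1 := by
      rw [← _root_.map_mul, inv_mul_cancel, _root_.map_one]
    calc ψ (h : G) * T = ψ (h : G) * T * (ψ ((h : G)⁻¹) * ψ (h : G)) := by
          rw [h1, mul_one]
      _ = (ψ (h : G) * T * ψ ((h : G)⁻¹)) * ψ (h : G) := by
          rw [mul_assoc (ψ (h : G) * T)]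
      _ = T * ψ (h : G) := by rw [Φeq]
  set S : ∀ b b' : B, Matrix (Fin (dB b)) (Fin (dB b')) ℂ :=
    fun b b' => Matrix.of fun i j => T ⟨b, i⟩ ⟨b', j⟩ with hSdef
  have hS : ∀ (b b' : B) (h : H), φ b h * S b b' = S b b' * φ b' h := by
    intro b b' h
    ext i j
    have hcf := congrFun (congrFun (hTcomm h) ⟨b, i⟩) ⟨b', j⟩
    rw [hblock h] at hcf
    rw [blockDiagonal'_mul_apply, mul_blockDiagonal'_apply] at hcf
    simpa [hSdef, Matrix.mul_apply] using hcf
  have hoff : ∀ b b', b ≠ b' → S b b' = 0 := fun b b' hne =>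
    hmf b b' hne (S b b') (fun h => hS b b' h)
  choose η hη using fun b => schur_comm (φ b) (hφirr b) (S b b) (fun h => hS b b h)
  refine ⟨η, ?_⟩
  ext ⟨b, i⟩ ⟨b', j⟩
  rcases eq_or_ne b b' with rfl | hne
  · rw [Matrix.blockDiagonal'_apply_eq]
    have := congrFun (congrFun (hη b) i) j
    simpa [hSdef] using this
  · rw [Matrix.blockDiagonal'_apply_ne _ _ _ hne]
    have := congrFun (congrFun (hoff b b' hne) i) j
    simpa [hSdef] using this
end
end

section
/- Let ψ^μ be a PRIR of S(m) with respect to the subgroup S(m-1). Then the Jucys-Murphy element J_m = Σ_{a=1}^{m-1} (a m) is represented by the block-diagonal matrix ψ^μ(J_m) = ⊕_{α} γ_μ(α)·1_{d_α}, where the eigenvalue on the H-irrep block α is γ_μ(α) = C(m,2)·χ^μ((12))/d_μ − C(m-1,2)·χ^α((12))/d_α, with multiplicity d_α. -/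
open Matrix

noncomputable section

section Helpers


lemma schur_scalar {G ι : Type*} [Group G] [Fintype ι] [DecidableEq ι]
    (ρ : G →* Matrix ι ι ℂ) (hirr : MatIrred ρ) (T : Matrix ι ι ℂ)
    (hT : ∀ g, ρ g * T = T * ρ g) :
    T = (Matrix.trace T / (Fintype.card ι : ℂ)) • 1 := by
  rcases isEmpty_or_nonempty ι with h | h
  · exact Subsingleton.elim _ _
  · obtain ⟨c, hc⟩ := Module.End.exists_eigenvalue (T.mulVecLin)
    have hinv : ∀ g : G, ∀ v ∈ Module.End.eigenspace T.mulVecLin c,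
        (ρ g).mulVec v ∈ Module.End.eigenspace T.mulVecLin c := by
      intro g v hv
      rw [Module.End.mem_eigenspace_iff] at hv ⊢
      rw [Matrix.mulVecLin_apply] at hv ⊢
      rw [Matrix.mulVec_mulVec, ← hT g, ← Matrix.mulVec_mulVec, hv,
        Matrix.mulVec_smul]
    have hW : Module.End.eigenspace T.mulVecLin c = ⊤ := by
      rcases hirr _ hinv with hbot | htop
      · exact absurd hbot hc
      · exact htop
    have hTv : ∀ v : ι → ℂ, T *ᵥ v = c • v := fun v => by
      have hv : v ∈ Module.End.eigenspace T.mulVecLin c := hW ▸ Submodule.mem_top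
      rw [Module.End.mem_eigenspace_iff, Matrix.mulVecLin_apply] at hv
      exact hv
    have hT1 : T = c • 1 := by
      ext i j
      have := congrFun (hTv (Pi.single j 1)) i
      simp only [Matrix.mulVec_single_one, Matrix.col_apply] at this
      simp [this, Matrix.one_apply, Pi.single_apply, mul_comm]
    have hcard : (Fintype.card ι : ℂ) ≠ 0 := by
      exact_mod_cast Fintype.card_ne_zero
    rw [hT1, Matrix.trace_smul, Matrix.trace_one, smul_eq_mul]
    congr 1
    field_simp



lemma card_pairs_lt {n : ℕ} (q : Fin n → Prop) [DecidablePred q] :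
    ((Finset.univ : Finset (Fin n × Fin n)).filter fun p => p.1 < p.2 ∧ q p.2).card
      = ∑ b ∈ Finset.univ.filter q, (b : ℕ) := by
  rw [Finset.card_filter, ← Finset.univ_product_univ, Finset.sum_product, Finset.sum_comm]
  rw [Finset.sum_filter]
  refine Finset.sum_congr rfl fun b _ => ?_
  by_cases hb : q b
  · simp only [hb, and_true, if_true]
    have : ∀ a : Fin n, (if a < b then 1 else 0) = if a ∈ Finset.Iio b then 1 else 0 := by
      intro a; simp [Finset.mem_Iio]
    rw [Finset.sum_congr rfl (fun a _ => this a), ← Finset.card_filter]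
    have h4 : (Finset.univ.filter fun i : Fin n => i ∈ Finset.Iio b) = Finset.Iio b := by
      ext a; simp
    rw [h4, Fin.card_Iio]
  · simp [hb]

lemma sum_fin_val (n : ℕ) : ∑ b : Fin n, (b : ℕ) = n.choose 2 := by
  rw [Fin.sum_univ_eq_sum_range (fun k => k), Finset.sum_range_id, Nat.choose_two_right]

lemma card_pairs (n : ℕ) :
    ((Finset.univ : Finset (Fin n × Fin n)).filter fun p => p.1 < p.2).card = n.choose 2 := by
  have := card_pairs_lt (n := n) (fun _ => True)
  simpa [sum_fin_val] using this

lemma card_pairs_ne {n : ℕ} (x : Fin n) (hx : (x : ℕ) = n - 1) (hn : 1 ≤ n) :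
    ((Finset.univ : Finset (Fin n × Fin n)).filter fun p => p.1 < p.2 ∧ p.2 ≠ x).card
      = (n - 1).choose 2 := by
  have h0 := card_pairs_lt (n := n) (fun b => b ≠ x)
  rw [h0]
  have h1 : (Finset.univ.filter fun b : Fin n => b ≠ x) = Finset.univ.erase x := by
    ext b; simp [Finset.mem_erase, and_comm]
  rw [h1]
  have h2 : ∑ b ∈ Finset.univ.erase x, (b : ℕ) + (x : ℕ) = ∑ b : Fin n, (b : ℕ) :=
    Finset.sum_erase_add _ _ (Finset.mem_univ x)
  rw [sum_fin_val] at h2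
  have h3 : n.choose 2 = (n - 1) + (n - 1).choose 2 := by
    obtain ⟨k, rfl⟩ := Nat.exists_eq_add_of_le hn
    simp [Nat.choose_succ_succ, Nat.add_comm]
  omega


lemma exists_conj_perm {n : ℕ} (a0 a1 i j : Fin n) (h01 : a0 ≠ a1) (hij : i ≠ j) :
    ∃ g : Equiv.Perm (Fin n), g a0 = i ∧ g a1 = j ∧
      ∀ y, y ≠ a0 → y ≠ a1 → y ≠ i → y ≠ j → g y = y := by
  refine ⟨Equiv.swap (Equiv.swap a0 i a1) j * Equiv.swap a0 i, ?_, ?_, ?_⟩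
  · simp only [Equiv.Perm.mul_apply, Equiv.swap_apply_left]
    refine Equiv.swap_apply_of_ne_of_ne ?_ hij
    by_cases h : a1 = i
    · rw [h, Equiv.swap_apply_right]
      exact fun hc => h01 (hc.symm.trans h.symm)
    · rw [Equiv.swap_apply_of_ne_of_ne (Ne.symm h01) h]
      exact Ne.symm h
  · simp only [Equiv.Perm.mul_apply]
    exact Equiv.swap_apply_left _ _
  · intro y hy0 hy1 hyi hyj
    simp only [Equiv.Perm.mul_apply]
    rw [Equiv.swap_apply_of_ne_of_ne hy0 hyi]
    refine Equiv.swap_apply_of_ne_of_ne ?_ hyj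
    by_cases h : a1 = i
    · rw [h, Equiv.swap_apply_right]; exact hy0
    · rw [Equiv.swap_apply_of_ne_of_ne (Ne.symm h01) h]; exact hy1

lemma sum_swap_reindex {n : ℕ} {M : Type*} [AddCommMonoid M]
    (F : Equiv.Perm (Fin n) → M) (g : Equiv.Perm (Fin n))
    (Q : Finset (Fin n × Fin n)) (hQ : ∀ p ∈ Q, p.1 < p.2)
    (hcg : ∀ p ∈ Q, (if g p.1 < g p.2 then (g p.1, g p.2) else (g p.2, g p.1)) ∈ Q)
    (hcg' : ∀ p ∈ Q, (if g⁻¹ p.1 < g⁻¹ p.2 then (g⁻¹ p.1, g⁻¹ p.2)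
        else (g⁻¹ p.2, g⁻¹ p.1)) ∈ Q) :
    ∑ p ∈ Q, F (Equiv.swap (g p.1) (g p.2)) = ∑ p ∈ Q, F (Equiv.swap p.1 p.2) := by
  refine Finset.sum_nbij'
    (i := fun p => if g p.1 < g p.2 then (g p.1, g p.2) else (g p.2, g p.1))
    (j := fun p => if g⁻¹ p.1 < g⁻¹ p.2 then (g⁻¹ p.1, g⁻¹ p.2) else (g⁻¹ p.2, g⁻¹ p.1))
    hcg hcg' ?_ ?_ ?_
  · intro p hp
    have hlt := hQ p hp
    by_cases h1 : g p.1 < g p.2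
    · rw [if_pos h1]
      dsimp only
      rw [Equiv.Perm.inv_def, Equiv.symm_apply_apply, Equiv.symm_apply_apply, if_pos hlt]
    · rw [if_neg h1]
      dsimp only
      rw [Equiv.Perm.inv_def, Equiv.symm_apply_apply, Equiv.symm_apply_apply, if_neg (lt_asymm hlt)]
  · intro p hp
    have hlt := hQ p hp
    by_cases h1 : g⁻¹ p.1 < g⁻¹ p.2
    · rw [if_pos h1]
      dsimp only
      rw [Equiv.Perm.inv_def, Equiv.apply_symm_apply, Equiv.apply_symm_apply, if_pos hlt]
    · rw [if_neg h1]
      dsimp only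
      rw [Equiv.Perm.inv_def, Equiv.apply_symm_apply, Equiv.apply_symm_apply, if_neg (lt_asymm hlt)]
  · intro p hp
    by_cases h1 : g p.1 < g p.2
    · rw [if_pos h1]
    · rw [if_neg h1]
      exact congrArg F (Equiv.swap_comm _ _)

lemma swap_mul_eq {α : Type*} [DecidableEq α] (g : Equiv.Perm α) (i j : α) :
    g * Equiv.swap i j = Equiv.swap (g i) (g j) * g := by
  rw [Equiv.swap_apply_apply]; group

lemma rep_trace_conj {G ι : Type*} [Group G] [Fintype ι] [DecidableEq ι]
    (ρ : G →* Matrix ι ι ℂ) (g s : G) :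
    Matrix.trace (ρ (g * s * g⁻¹)) = Matrix.trace (ρ s) := by
  rw [_root_.map_mul, Matrix.trace_mul_comm, ← _root_.map_mul, inv_mul_cancel_left]

lemma blockDiagonal'_finsum {ι o α : Type*} [DecidableEq o] {m' : o → Type*}
    [AddCommMonoid α] (s : Finset ι) (f : ι → ∀ b : o, Matrix (m' b) (m' b) α) :
    ∑ p ∈ s, Matrix.blockDiagonal' (f p)
      = Matrix.blockDiagonal' (fun b => ∑ p ∈ s, f p b) := by
  induction s using Finset.cons_induction with
  | empty =>
    refine (Matrix.blockDiagonal'_zero).symm.trans ?_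
    rfl
  | cons a s ha ih =>
    rw [Finset.sum_cons, ih, ← Matrix.blockDiagonal'_add]
    refine congrArg _ (funext fun b => ?_)
    show f a b + ∑ p ∈ s, f p b = ∑ p ∈ Finset.cons a s ha, f p b
    rw [Finset.sum_cons]

end Helpers

/-- for a PRIR `ψ^μ` of `S(m)` w.r.t. the subgroup `S(m-1)` fixing the point
`x = m-1`, the Jucys–Murphy element `J_m = Σ_a (a m)` is represented by the block
diagonal matrix `⊕_α γ_μ(α)·1_{d_α}` with
`γ_μ(α) = C(m,2)·χ^μ((12))/d_μ − C(m-1,2)·χ^α((12))/d_α`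
(each eigenvalue `γ_μ(α)` occurring with multiplicity `d_α`). -/
theorem jucys_murphy_block_diagonal {m : ℕ} (hm : 3 ≤ m)
    (x a0 a1 : Fin m) (hx : (x : ℕ) = m - 1) (ha0 : (a0 : ℕ) = 0) (ha1 : (a1 : ℕ) = 1)
    (hmem : Equiv.swap a0 a1 ∈ MulAction.stabilizer (Equiv.Perm (Fin m)) x)
    {B : Type*} [Fintype B] [DecidableEq B] (dB : B → ℕ)
    (φ : ∀ b : B, (MulAction.stabilizer (Equiv.Perm (Fin m)) x) →*
        Matrix (Fin (dB b)) (Fin (dB b)) ℂ)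
    (ψ : Equiv.Perm (Fin m) →*
        Matrix ((b : B) × Fin (dB b)) ((b : B) × Fin (dB b)) ℂ)
    (hψu : ∀ g, (ψ g)ᴴ * ψ g = 1) (hψirr : MatIrred ψ)
    (hblock : ∀ h : MulAction.stabilizer (Equiv.Perm (Fin m)) x,
        ψ (h : Equiv.Perm (Fin m)) = Matrix.blockDiagonal' (fun b => φ b h))
    (hφirr : ∀ b, MatIrred (φ b))
    (hmf : ∀ b b' : B, b ≠ b' → MatInequiv (φ b) (φ b')) :
    ∑ a ∈ Finset.univ.filter (fun a : Fin m => a ≠ x), ψ (Equiv.swap a x)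
      = Matrix.blockDiagonal' (fun b =>
          ((m.choose 2 : ℂ) * Matrix.trace (ψ (Equiv.swap a0 a1)) /
              (Fintype.card ((b : B) × Fin (dB b)) : ℂ) -
            ((m - 1).choose 2 : ℂ) * Matrix.trace (φ b ⟨Equiv.swap a0 a1, hmem⟩) /
              (dB b : ℂ)) • (1 : Matrix (Fin (dB b)) (Fin (dB b)) ℂ)) := by
  classical
  -- basic distinctness facts
  have h01 : a0 ≠ a1 := Fin.ne_of_val_ne (by omega)
  have h0x : a0 ≠ x := Fin.ne_of_val_ne (by omega)
  have h1x : a1 ≠ x := Fin.ne_of_val_ne (by omega)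
  have hxmax : ∀ a : Fin m, a ≠ x → a < x := by
    intro a ha
    have h1 := a.isLt
    rw [Fin.lt_def]
    have ha' : (a : ℕ) ≠ (x : ℕ) := fun hc => ha (Fin.ext hc)
    omega
  have hnotlt : ∀ a : Fin m, ¬ x < a := by
    intro a hc
    rw [Fin.lt_def] at hc
    have := a.isLt
    omega
  -- stabilizer membership of swaps avoiding x
  have hswapH : ∀ i j : Fin m, i ≠ x → j ≠ x → Equiv.swap i j ∈ MulAction.stabilizer (Equiv.Perm (Fin m)) x := by
    intro i j hi hj
    rw [MulAction.mem_stabilizer_iff, Equiv.Perm.smul_def]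
    exact Equiv.swap_apply_of_ne_of_ne (Ne.symm hi) (Ne.symm hj)
  have hfix : ∀ h : MulAction.stabilizer (Equiv.Perm (Fin m)) x, (h : Equiv.Perm (Fin m)) x = x := by
    intro h
    have h2 := h.2
    rwa [MulAction.mem_stabilizer_iff, Equiv.Perm.smul_def] at h2
  have hgne : ∀ g : Equiv.Perm (Fin m), g x = x → ∀ a : Fin m, a ≠ x → g a ≠ x := by
    intro g hg a ha hc
    exact ha (g.injective (hc.trans hg.symm))
  -- the pair sets
  set P : Finset (Fin m × Fin m) := Finset.univ.filter (fun p => p.1 < p.2) with hPdef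
  set P1 : Finset (Fin m × Fin m) := P.filter (fun p => ¬ p.2 = x) with hP1def
  set P2 : Finset (Fin m × Fin m) := P.filter (fun p => p.2 = x) with hP2def
  have hPlt : ∀ p ∈ P, p.1 < p.2 := by
    intro p hp; rw [hPdef, Finset.mem_filter] at hp; exact hp.2
  have hP1lt : ∀ p ∈ P1, p.1 < p.2 := by
    intro p hp; rw [hP1def, Finset.mem_filter] at hp; exact hPlt p hp.1
  have hP1x2 : ∀ p ∈ P1, p.2 ≠ x := by
    intro p hp; rw [hP1def, Finset.mem_filter] at hp; exact hp.2
  have hP1x1 : ∀ p ∈ P1, p.1 ≠ x := by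
    intro p hp hc
    exact hnotlt p.2 (hc ▸ hP1lt p hp)
  -- closure of P under sorted action of any permutation
  have hclP : ∀ g : Equiv.Perm (Fin m), ∀ p ∈ P,
      (if g p.1 < g p.2 then (g p.1, g p.2) else (g p.2, g p.1)) ∈ P := by
    intro g p hp
    have hlt := hPlt p hp
    have hne : g p.1 ≠ g p.2 := fun hc => absurd (g.injective hc) (ne_of_lt hlt)
    by_cases h1 : g p.1 < g p.2
    · rw [if_pos h1, hPdef, Finset.mem_filter]
      exact ⟨Finset.mem_univ _, h1⟩
    · rw [if_neg h1, hPdef, Finset.mem_filter]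
      exact ⟨Finset.mem_univ _, lt_of_le_of_ne (not_lt.mp h1) (Ne.symm hne)⟩
  -- closure of P1 under sorted action of stabilizer elements
  have hclP1 : ∀ g : Equiv.Perm (Fin m), g x = x → ∀ p ∈ P1,
      (if g p.1 < g p.2 then (g p.1, g p.2) else (g p.2, g p.1)) ∈ P1 := by
    intro g hg p hp
    rw [hP1def, Finset.mem_filter] at hp
    have h2 := hgne g hg p.2 (hP1x2 p (by rw [hP1def, Finset.mem_filter]; exact hp))
    have h1 := hgne g hg p.1 (hP1x1 p (by rw [hP1def, Finset.mem_filter]; exact hp))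
    have hcl := hclP g p hp.1
    by_cases hlt : g p.1 < g p.2
    · rw [if_pos hlt] at hcl ⊢
      rw [hP1def, Finset.mem_filter]
      exact ⟨hcl, h2⟩
    · rw [if_neg hlt] at hcl ⊢
      rw [hP1def, Finset.mem_filter]
      exact ⟨hcl, h1⟩
  -- trace of ψ on any transposition
  have htrψ : ∀ p ∈ P, Matrix.trace (ψ (Equiv.swap p.1 p.2))
      = Matrix.trace (ψ (Equiv.swap a0 a1)) := by
    intro p hp
    obtain ⟨g, hg0, hg1, -⟩ := exists_conj_perm a0 a1 p.1 p.2 h01 (ne_of_lt (hPlt p hp))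
    have hkey : Equiv.swap p.1 p.2 = g * Equiv.swap a0 a1 * g⁻¹ := by
      rw [← hg0, ← hg1]
      exact Equiv.swap_apply_apply g a0 a1
    rw [hkey]
    exact rep_trace_conj ψ g _
  -- Part 1 : the full sum is a scalar
  have hcommA : ∀ g, ψ g * (∑ p ∈ P, ψ (Equiv.swap p.1 p.2))
      = (∑ p ∈ P, ψ (Equiv.swap p.1 p.2)) * ψ g := by
    intro g
    rw [Finset.mul_sum, Finset.sum_mul]
    have step : ∀ p ∈ P, ψ g * ψ (Equiv.swap p.1 p.2)
        = ψ (Equiv.swap (g p.1) (g p.2)) * ψ g := by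
      intro p hp
      rw [← _root_.map_mul, swap_mul_eq, _root_.map_mul]
    rw [Finset.sum_congr rfl step, ← Finset.sum_mul, ← Finset.sum_mul]
    congr 1
    exact sum_swap_reindex (fun σ => ψ σ) g P hPlt (hclP g) (hclP g⁻¹)
  have hcardP : P.card = m.choose 2 := by
    rw [hPdef]; exact card_pairs m
  have htrA : Matrix.trace (∑ p ∈ P, ψ (Equiv.swap p.1 p.2))
      = (m.choose 2 : ℂ) * Matrix.trace (ψ (Equiv.swap a0 a1)) := by
    rw [Matrix.trace_sum, Finset.sum_congr rfl htrψ, Finset.sum_const, hcardP,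
      nsmul_eq_mul]
  have hA : (∑ p ∈ P, ψ (Equiv.swap p.1 p.2))
      = ((m.choose 2 : ℂ) * Matrix.trace (ψ (Equiv.swap a0 a1)) /
          (Fintype.card ((b : B) × Fin (dB b)) : ℂ)) •
        (1 : Matrix ((b : B) × Fin (dB b)) ((b : B) × Fin (dB b)) ℂ) := by
    rw [schur_scalar ψ hψirr _ hcommA, htrA]
  -- Part 2 : per-block analysis
  set Φ : (b : B) → Equiv.Perm (Fin m) → Matrix (Fin (dB b)) (Fin (dB b)) ℂ :=
    fun b σ => if hσ : σ ∈ MulAction.stabilizer (Equiv.Perm (Fin m)) x then φ b ⟨σ, hσ⟩ else 0 with hΦdef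
  have hΦmem : ∀ b, ∀ σ : Equiv.Perm (Fin m), ∀ hσ : σ ∈ MulAction.stabilizer (Equiv.Perm (Fin m)) x, Φ b σ = φ b ⟨σ, hσ⟩ := by
    intro b σ hσ; rw [hΦdef]; exact dif_pos hσ
  have hswapP1 : ∀ p ∈ P1, Equiv.swap p.1 p.2 ∈ MulAction.stabilizer (Equiv.Perm (Fin m)) x := by
    intro p hp
    exact hswapH p.1 p.2 (hP1x1 p hp) (hP1x2 p hp)
  have hcardP1 : P1.card = (m - 1).choose 2 := by
    rw [hP1def, hPdef, Finset.filter_filter]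
    exact card_pairs_ne x hx (by omega)
  have hMb : ∀ b, (∑ p ∈ P1, Φ b (Equiv.swap p.1 p.2))
      = (((m - 1).choose 2 : ℂ) * Matrix.trace (φ b ⟨Equiv.swap a0 a1, hmem⟩) /
          (dB b : ℂ)) • (1 : Matrix (Fin (dB b)) (Fin (dB b)) ℂ) := by
    intro b
    have hcomm : ∀ h : MulAction.stabilizer (Equiv.Perm (Fin m)) x, φ b h * (∑ p ∈ P1, Φ b (Equiv.swap p.1 p.2))
        = (∑ p ∈ P1, Φ b (Equiv.swap p.1 p.2)) * φ b h := by
      intro h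
      set g : Equiv.Perm (Fin m) := (h : Equiv.Perm (Fin m)) with hgdef
      have hgx : g x = x := hfix h
      rw [Finset.mul_sum, Finset.sum_mul]
      have step : ∀ p ∈ P1, φ b h * Φ b (Equiv.swap p.1 p.2)
          = Φ b (Equiv.swap (g p.1) (g p.2)) * φ b h := by
        intro p hp
        have hm1 : Equiv.swap p.1 p.2 ∈ MulAction.stabilizer (Equiv.Perm (Fin m)) x := hswapP1 p hp
        have hm2 : Equiv.swap (g p.1) (g p.2) ∈ MulAction.stabilizer (Equiv.Perm (Fin m)) x :=
          hswapH _ _ (hgne g hgx p.1 (hP1x1 p hp)) (hgne g hgx p.2 (hP1x2 p hp))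
        rw [hΦmem b _ hm1, hΦmem b _ hm2, ← _root_.map_mul, ← _root_.map_mul]
        congr 1
        apply Subtype.ext
        show g * Equiv.swap p.1 p.2 = Equiv.swap (g p.1) (g p.2) * g
        exact swap_mul_eq g p.1 p.2
      rw [Finset.sum_congr rfl step, ← Finset.sum_mul, ← Finset.sum_mul]
      congr 1
      have hgx' : g⁻¹ x = x := g.injective (by rw [Equiv.Perm.inv_def, Equiv.apply_symm_apply, hgx])
      exact sum_swap_reindex (Φ b) g P1 hP1lt (hclP1 g hgx) (hclP1 g⁻¹ hgx')
    have htrb : ∀ p ∈ P1, Matrix.trace (Φ b (Equiv.swap p.1 p.2))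
        = Matrix.trace (φ b ⟨Equiv.swap a0 a1, hmem⟩) := by
      intro p hp
      have hne := ne_of_lt (hP1lt p hp)
      obtain ⟨g, hg0, hg1, hgfix⟩ := exists_conj_perm a0 a1 p.1 p.2 h01 hne
      have hgx : g x = x :=
        hgfix x (Ne.symm h0x) (Ne.symm h1x) (Ne.symm (hP1x1 p hp)) (Ne.symm (hP1x2 p hp))
      have hgH : g ∈ MulAction.stabilizer (Equiv.Perm (Fin m)) x := by
        rw [MulAction.mem_stabilizer_iff, Equiv.Perm.smul_def]; exact hgx
      have hm1 : Equiv.swap p.1 p.2 ∈ MulAction.stabilizer (Equiv.Perm (Fin m)) x := hswapP1 p hp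
      rw [hΦmem b _ hm1]
      have hkey : (⟨Equiv.swap p.1 p.2, hm1⟩ : MulAction.stabilizer (Equiv.Perm (Fin m)) x)
          = ⟨g, hgH⟩ * ⟨Equiv.swap a0 a1, hmem⟩ * (⟨g, hgH⟩)⁻¹ := by
        apply Subtype.ext
        show Equiv.swap p.1 p.2 = g * Equiv.swap a0 a1 * g⁻¹
        rw [← hg0, ← hg1]
        exact Equiv.swap_apply_apply g a0 a1
      rw [hkey]
      exact rep_trace_conj (φ b) ⟨g, hgH⟩ _
    have hsch := schur_scalar (φ b) (hφirr b) _ hcomm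
    rw [hsch, Matrix.trace_sum, Finset.sum_congr rfl htrb, Finset.sum_const, hcardP1,
      nsmul_eq_mul, Fintype.card_fin]
  -- Part 3 : the P1 sum of ψ is block diagonal
  have hsum1 : (∑ p ∈ P1, ψ (Equiv.swap p.1 p.2))
      = Matrix.blockDiagonal' (fun b => ∑ p ∈ P1, Φ b (Equiv.swap p.1 p.2)) := by
    have step : ∀ p ∈ P1, ψ (Equiv.swap p.1 p.2)
        = Matrix.blockDiagonal' (fun b => Φ b (Equiv.swap p.1 p.2)) := by
      intro p hp
      have hm1 : Equiv.swap p.1 p.2 ∈ MulAction.stabilizer (Equiv.Perm (Fin m)) x := hswapP1 p hp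
      have hb : ψ (Equiv.swap p.1 p.2)
          = Matrix.blockDiagonal' (fun b => φ b ⟨Equiv.swap p.1 p.2, hm1⟩) :=
        hblock ⟨Equiv.swap p.1 p.2, hm1⟩
      rw [hb]
      exact congrArg _ (funext fun b => (hΦmem b _ hm1).symm)
    rw [Finset.sum_congr rfl step]
    exact blockDiagonal'_finsum P1 _
  -- Part 4 : LHS as P2 sum
  have hLHS : ∑ a ∈ Finset.univ.filter (fun a : Fin m => a ≠ x), ψ (Equiv.swap a x)
      = ∑ p ∈ P2, ψ (Equiv.swap p.1 p.2) := by
    refine Finset.sum_nbij' (i := fun a => (a, x)) (j := fun p => p.1) ?_ ?_ ?_ ?_ ?_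
    · intro a ha
      rw [Finset.mem_filter] at ha
      rw [hP2def, Finset.mem_filter, hPdef, Finset.mem_filter]
      exact ⟨⟨Finset.mem_univ _, hxmax a ha.2⟩, rfl⟩
    · intro p hp
      rw [hP2def, Finset.mem_filter] at hp
      rw [Finset.mem_filter]
      refine ⟨Finset.mem_univ _, ?_⟩
      intro hc
      exact hnotlt p.2 (hc ▸ hPlt p hp.1)
    · intro a ha; rfl
    · intro p hp
      rw [hP2def, Finset.mem_filter] at hp
      rw [← hp.2]
    · intro a ha; rfl
  -- Part 5 : splitting
  have hsplit : (∑ p ∈ P2, ψ (Equiv.swap p.1 p.2)) + (∑ p ∈ P1, ψ (Equiv.swap p.1 p.2))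
      = ∑ p ∈ P, ψ (Equiv.swap p.1 p.2) := by
    rw [hP1def, hP2def]
    exact Finset.sum_filter_add_sum_filter_not P (fun p => p.2 = x) _
  -- assemble
  rw [hLHS, eq_sub_of_add_eq hsplit, hA, hsum1]
  have hone : ((m.choose 2 : ℂ) * Matrix.trace (ψ (Equiv.swap a0 a1)) /
        (Fintype.card ((b : B) × Fin (dB b)) : ℂ)) •
        (1 : Matrix ((b : B) × Fin (dB b)) ((b : B) × Fin (dB b)) ℂ)
      = Matrix.blockDiagonal' (fun b =>
          ((m.choose 2 : ℂ) * Matrix.trace (ψ (Equiv.swap a0 a1)) /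
            (Fintype.card ((b : B) × Fin (dB b)) : ℂ)) •
          (1 : Matrix (Fin (dB b)) (Fin (dB b)) ℂ)) := by
    rw [← Matrix.blockDiagonal'_one, ← Matrix.blockDiagonal'_smul]
    rfl
  have hMbfun : (fun b => ∑ p ∈ P1, Φ b (Equiv.swap p.1 p.2))
      = fun b => (((m - 1).choose 2 : ℂ) *
          Matrix.trace (φ b ⟨Equiv.swap a0 a1, hmem⟩) / (dB b : ℂ)) •
          (1 : Matrix (Fin (dB b)) (Fin (dB b)) ℂ) :=
    funext fun b => hMb b
  rw [hMbfun, hone, ← Matrix.blockDiagonal'_sub]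
  refine congrArg _ (funext fun b => ?_)
  show ((m.choose 2 : ℂ) * Matrix.trace (ψ (Equiv.swap a0 a1)) /
        (Fintype.card ((b : B) × Fin (dB b)) : ℂ)) • (1 : Matrix (Fin (dB b)) (Fin (dB b)) ℂ)
      - (((m - 1).choose 2 : ℂ) * Matrix.trace (φ b ⟨Equiv.swap a0 a1, hmem⟩) /
        (dB b : ℂ)) • (1 : Matrix (Fin (dB b)) (Fin (dB b)) ℂ) = _
  rw [sub_smul]
end
end
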